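/- Fix s > d, let K = ℤ^d, and let A ∈ 𝒜_s (i.e., |a_{kl}| ≤ C(1+|k−l|)^{−s}). Let m be a t-moderate weight on ℤ^d, i.e., m(k+l) ≤ C'(1+|k|)^t m(l) for all k, l, where 0 ≤ t < s − d. Then A defines a bounded operator on ℓ^p_m(ℤ^d) for every 1 ≤ p ≤ ∞. -/

import Mathlib

open scoped ENNReal NNReal

-- Euclidean norm on ℤ^d.
noncomputable def znorm {d : ℕ} (k : Fin d → ℤ) : ℝ :=
  Real.sqrt (∑ i, ((k i : ℝ)) ^ 2)

-- The weighted `ℓ^p_m`-norm (with values in `ℝ≥0∞`), for `1 ≤ p ≤ ∞`.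
noncomputable def wnorm {K : Type*} (p : ℝ≥0∞) (m : K → ℝ) (c : K → ℂ) : ℝ≥0∞ :=
  if p = ∞ then ⨆ k, ((‖c k‖₊ * ‖m k‖₊ : ℝ≥0) : ℝ≥0∞)
  else (∑' k, ((‖c k‖₊ * ‖m k‖₊ : ℝ≥0) : ℝ≥0∞) ^ p.toReal) ^ (1 / p.toReal)

lemma aux_sum_int {u : ℝ} (hu : 1 < u) :
    Summable (fun n : ℤ => (1 + |(n : ℝ)|) ^ (-u)) := by
  have h1 : Summable (fun n : ℤ => |(n : ℝ)| ^ (-u)) := Real.summable_abs_int_rpow hu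
  have h2 : Summable (fun n : ℤ => if n = 0 then (1 : ℝ) else 0) :=
    (hasSum_ite_eq (0 : ℤ) (1 : ℝ)).summable
  refine Summable.of_nonneg_of_le (fun n => Real.rpow_nonneg (by positivity) _)
    (fun n => ?_) (h1.add h2)
  by_cases hn : n = 0
  · simp [hn, Real.zero_rpow (by linarith : -u ≠ 0)]
  · simp only [hn, if_false, add_zero]
    apply Real.rpow_le_rpow_of_nonpos
    · have : (1 : ℝ) ≤ |(n : ℝ)| := by
        rw [← Int.cast_abs]; exact_mod_cast Int.one_le_abs (by simpa using hn)
      linarith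
    · linarith
    · linarith

lemma aux_sum_int_enn {u : ℝ} (hu : 1 < u) :
    (∑' n : ℤ, ENNReal.ofReal ((1 + |(n : ℝ)|) ^ (-u))) ≠ ⊤ := by
  rw [← ENNReal.ofReal_tsum_of_nonneg (fun n => Real.rpow_nonneg (by positivity) _)
    (aux_sum_int hu)]
  exact ENNReal.ofReal_ne_top

lemma tsum_pi_prod (d : ℕ) (f : ℤ → ℝ≥0∞) :
    ∑' k : Fin d → ℤ, ∏ i, f (k i) = (∑' n : ℤ, f n) ^ d := by
  induction d with
  | zero =>
    rw [pow_zero]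
    rw [tsum_eq_single (fun i => i.elim0)]
    · simp
    · intro b hb; exact absurd (funext fun i => i.elim0) hb
  | succ d ih =>
    have key : ∀ (aa : ℤ) (k : Fin d → ℤ),
        (∏ i, f (Fin.cons (α := fun _ => ℤ) aa k i)) = f aa * ∏ i, f (k i) := by
      intro aa k
      rw [Fin.prod_univ_succ]
      simp [Fin.cons_zero, Fin.cons_succ]
    rw [← (Fin.consEquiv (fun _ => ℤ)).tsum_eq (fun k => ∏ i, f (k i)), ENNReal.tsum_prod']
    simp only [Fin.consEquiv, Equiv.coe_fn_mk, key]
    simp_rw [ENNReal.tsum_mul_left, ih, ENNReal.tsum_mul_right, pow_succ]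
    ring

lemma znorm_nonneg {d : ℕ} (k : Fin d → ℤ) : 0 ≤ znorm k := Real.sqrt_nonneg _

lemma abs_le_znorm {d : ℕ} (k : Fin d → ℤ) (i : Fin d) : |(k i : ℝ)| ≤ znorm k := by
  rw [← Real.sqrt_sq_eq_abs]
  exact Real.sqrt_le_sqrt (Finset.single_le_sum (f := fun j => ((k j : ℝ))^2)
    (fun j _ => sq_nonneg _) (Finset.mem_univ i))

lemma aux_sum_pi {d : ℕ} {r : ℝ} (hr : (d : ℝ) < r) :
    (∑' k : Fin d → ℤ, ENNReal.ofReal ((1 + znorm k) ^ (-r))) ≠ ⊤ := by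
  rcases Nat.eq_zero_or_pos d with hd | hd
  · subst hd
    rw [tsum_eq_single (fun i => i.elim0) (fun b hb => absurd (funext fun i => i.elim0) hb)]
    exact ENNReal.ofReal_ne_top
  have hd' : (0 : ℝ) < d := by exact_mod_cast hd
  have hu : 1 < r / d := (one_lt_div hd').mpr hr
  have hbound : (∑' k : Fin d → ℤ, ENNReal.ofReal ((1 + znorm k) ^ (-r)))
      ≤ (∑' n : ℤ, ENNReal.ofReal ((1 + |(n : ℝ)|) ^ (-(r/d)))) ^ d := calc
    (∑' k : Fin d → ℤ, ENNReal.ofReal ((1 + znorm k) ^ (-r)))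
      ≤ ∑' k : Fin d → ℤ, ∏ i, ENNReal.ofReal ((1 + |(k i : ℝ)|) ^ (-(r/d))) := by
        refine ENNReal.tsum_le_tsum fun k => ?_
        have hb : ∀ i ∈ Finset.univ, (0:ℝ) ≤ (1 + |(k i : ℝ)|) ^ (-(r/d)) :=
          fun i _ => Real.rpow_nonneg (by positivity) _
        rw [← ENNReal.ofReal_prod_of_nonneg hb]
        apply ENNReal.ofReal_le_ofReal
        have hP : (0:ℝ) < ∏ i, (1 + |(k i : ℝ)|) :=
          Finset.prod_pos fun i _ => by positivity
        have hle : (∏ i, (1 + |(k i : ℝ)|)) ≤ (1 + znorm k) ^ (d : ℕ) := by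
          have h := Finset.prod_le_prod (s := Finset.univ)
            (f := fun i => 1 + |(k i : ℝ)|) (g := fun _ => 1 + znorm k)
            (fun i _ => by positivity) (fun i _ => by linarith [abs_le_znorm k i])
          simpa using h
        have e1 : (1 + znorm k) ^ (-r) = ((1 + znorm k) ^ (d : ℕ)) ^ (-(r/d)) := by
          rw [← Real.rpow_natCast (1 + znorm k) d,
            ← Real.rpow_mul (by linarith [znorm_nonneg k])]
          congr 1; field_simp
        have e2 : (∏ i, (1 + |(k i : ℝ)|) ^ (-(r/d))) = (∏ i, (1 + |(k i : ℝ)|)) ^ (-(r/d)) :=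
          Real.finset_prod_rpow _ _ (fun i _ => by positivity) _
        rw [e1, e2]
        exact Real.rpow_le_rpow_of_nonpos hP hle (neg_nonpos.mpr (by positivity))
      _ = (∑' n : ℤ, ENNReal.ofReal ((1 + |(n : ℝ)|) ^ (-(r/d)))) ^ d :=
        tsum_pi_prod d (fun n : ℤ => ENNReal.ofReal ((1 + |(n : ℝ)|) ^ (-(r/(d:ℝ)))))
  exact ne_top_of_le_ne_top (ENNReal.pow_ne_top (aux_sum_int_enn hu)) hbound

lemma holder_tsum_weight {ι : Type*} {q : ℝ} (hq : 1 ≤ q) (w f : ι → ℝ≥0∞) :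
    ∑' i, w i * f i ≤ (∑' i, w i) ^ (1 - q⁻¹) * (∑' i, w i * f i ^ q) ^ q⁻¹ := by
  rw [ENNReal.tsum_eq_iSup_sum]
  refine iSup_le fun s => (ENNReal.inner_le_weight_mul_Lp_of_nonneg s hq w f).trans ?_
  have h1 : (0:ℝ) ≤ 1 - q⁻¹ := by
    have : q⁻¹ ≤ 1 := inv_le_one_of_one_le₀ hq
    linarith
  exact mul_le_mul' (ENNReal.rpow_le_rpow (ENNReal.sum_le_tsum s) h1)
    (ENNReal.rpow_le_rpow (ENNReal.sum_le_tsum s) (by positivity))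

lemma enn_nnnorm_tsum_le {ι : Type*} (f : ι → ℂ) :
    ((‖∑' i, f i‖₊ : ℝ≥0) : ℝ≥0∞) ≤ ∑' i, ((‖f i‖₊ : ℝ≥0) : ℝ≥0∞) := by
  by_cases h : Summable fun i => ‖f i‖₊
  · rw [← ENNReal.coe_tsum h]
    exact_mod_cast nnnorm_tsum_le h
  · have : (∑' i, ((‖f i‖₊ : ℝ≥0) : ℝ≥0∞)) = ⊤ := by
      by_contra hne
      exact h (ENNReal.tsum_coe_ne_top_iff_summable.mp hne)
    rw [this]
    exact le_top


-- STATEMENT 9: for s > d, a matrix A in the Jaffard class 𝒜_s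
-- (|a_{kl}| ≤ C (1+|k−l|)^{−s}) is bounded on ℓ^p_m(ℤ^d) for every
-- 1 ≤ p ≤ ∞ and every t-moderate weight m with 0 ≤ t < s − d.
theorem jaffard_bounded_weighted_lp (d : ℕ) (s t : ℝ)
    (hs : (d : ℝ) < s) (ht0 : 0 ≤ t) (hts : t < s - d)
    (a : (Fin d → ℤ) → (Fin d → ℤ) → ℂ) (C : ℝ) (hC : 0 ≤ C)
    (ha : ∀ k l, ‖a k l‖ ≤ C * (1 + znorm (k - l)) ^ (-s))
    (m : (Fin d → ℤ) → ℝ) (hm : ∀ k, 0 < m k)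
    (C' : ℝ) (hC' : 0 < C')
    (hmod : ∀ k l, m (k + l) ≤ C' * (1 + znorm k) ^ t * m l)
    (p : ℝ≥0∞) (hp : 1 ≤ p) :
    ∃ Cb : ℝ≥0, ∀ c : (Fin d → ℤ) → ℂ,
      wnorm p m (fun k => ∑' l, a k l * c l) ≤ Cb * wnorm p m c := by
  have hr : (d : ℝ) < s - t := by linarith
  -- the dominating translation-invariant kernel
  set S : ℝ≥0∞ := ∑' j : Fin d → ℤ, ENNReal.ofReal ((1 + znorm j) ^ (t - s)) with hS_def
  have hS : S ≠ ⊤ := by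
    have := aux_sum_pi (d := d) hr
    simpa [neg_sub] using this
  set B : (Fin d → ℤ) → (Fin d → ℤ) → ℝ≥0∞ := fun k l =>
    ENNReal.ofReal (C * C') * ENNReal.ofReal ((1 + znorm (k - l)) ^ (t - s)) with hB_def
  set T : ℝ≥0∞ := ENNReal.ofReal (C * C') * S with hT_def
  have hT : T ≠ ⊤ := ENNReal.mul_ne_top ENNReal.ofReal_ne_top hS
  have hrow : ∀ k, ∑' l, B k l = T := by
    intro k
    rw [hT_def, hB_def, ENNReal.tsum_mul_left]
    congr 1
    rw [hS_def, ← (Equiv.subLeft k).tsum_eq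
      (fun j => ENNReal.ofReal ((1 + znorm j) ^ (t - s)))]
    exact tsum_congr fun l => by simp [Equiv.subLeft_apply]
  have hcol : ∀ l, ∑' k, B k l = T := by
    intro l
    rw [hT_def, hB_def, ENNReal.tsum_mul_left]
    congr 1
    rw [hS_def, ← (Equiv.subRight l).tsum_eq
      (fun j => ENNReal.ofReal ((1 + znorm j) ^ (t - s)))]
    exact tsum_congr fun k => by simp [Equiv.subRight_apply]
  -- kernel domination
  have hkernel : ∀ k l, ((‖a k l‖₊ : ℝ≥0) : ℝ≥0∞) * (‖m k‖₊ : ℝ≥0∞) ≤ B k l * ‖m l‖₊ := by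
    intro k l
    have hz : (0:ℝ) < 1 + znorm (k - l) := by linarith [znorm_nonneg (k - l)]
    have h2 : m k ≤ C' * (1 + znorm (k - l)) ^ t * m l := by
      have := hmod (k - l) l
      rwa [sub_add_cancel] at this
    have hmul : ‖a k l‖ * m k ≤
        (C * C') * (1 + znorm (k - l)) ^ (t - s) * m l := by
      have h3 : ‖a k l‖ * m k ≤
          (C * (1 + znorm (k - l)) ^ (-s)) * (C' * (1 + znorm (k - l)) ^ t * m l) :=
        mul_le_mul (ha k l) h2 (hm k).le (by positivity)
      have e : (C * (1 + znorm (k - l)) ^ (-s)) * (C' * (1 + znorm (k - l)) ^ t * m l)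
          = (C * C') * ((1 + znorm (k - l)) ^ (-s) * (1 + znorm (k - l)) ^ t) * m l := by
        ring
      have e2 : (1 + znorm (k - l)) ^ (-s) * (1 + znorm (k - l)) ^ t
          = (1 + znorm (k - l)) ^ (t - s) := by
        rw [← Real.rpow_add hz]; congr 1; ring
      rw [e, e2] at h3
      exact h3
    calc ((‖a k l‖₊ : ℝ≥0) : ℝ≥0∞) * (‖m k‖₊ : ℝ≥0∞)
        = ENNReal.ofReal (‖a k l‖ * m k) := by
          rw [ENNReal.ofReal_mul (norm_nonneg _), ofReal_norm, enorm_eq_nnnorm]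
          congr 1
          rw [← enorm_eq_nnnorm, ← ofReal_norm, Real.norm_of_nonneg (hm k).le]
      _ ≤ ENNReal.ofReal ((C * C') * (1 + znorm (k - l)) ^ (t - s) * m l) :=
          ENNReal.ofReal_le_ofReal hmul
      _ = B k l * ‖m l‖₊ := by
          rw [ENNReal.ofReal_mul (mul_nonneg (mul_nonneg hC hC'.le) (Real.rpow_nonneg hz.le _)),
            ENNReal.ofReal_mul (mul_nonneg hC hC'.le), hB_def]
          congr 1
          rw [← enorm_eq_nnnorm, ← ofReal_norm, Real.norm_of_nonneg (hm l).le]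
  -- pointwise bound
  have hpoint : ∀ (c : (Fin d → ℤ) → ℂ) k,
      ((‖(∑' l, a k l * c l)‖₊ : ℝ≥0) : ℝ≥0∞) * (‖m k‖₊ : ℝ≥0∞)
        ≤ ∑' l, B k l * ((‖c l‖₊ : ℝ≥0∞) * (‖m l‖₊ : ℝ≥0∞)) := by
    intro c k
    calc ((‖(∑' l, a k l * c l)‖₊ : ℝ≥0) : ℝ≥0∞) * (‖m k‖₊ : ℝ≥0∞)
        ≤ (∑' l, ((‖a k l * c l‖₊ : ℝ≥0) : ℝ≥0∞)) * (‖m k‖₊ : ℝ≥0∞) :=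
          mul_le_mul_left (enn_nnnorm_tsum_le _) _
      _ = ∑' l, ((‖a k l‖₊ : ℝ≥0∞) * (‖m k‖₊ : ℝ≥0∞)) * (‖c l‖₊ : ℝ≥0∞) := by
          rw [← ENNReal.tsum_mul_right]
          refine tsum_congr fun l => ?_
          rw [nnnorm_mul]; push_cast; ring
      _ ≤ ∑' l, (B k l * (‖m l‖₊ : ℝ≥0∞)) * (‖c l‖₊ : ℝ≥0∞) :=
          ENNReal.tsum_le_tsum fun l => mul_le_mul_left (hkernel k l) _
      _ = ∑' l, B k l * ((‖c l‖₊ : ℝ≥0∞) * (‖m l‖₊ : ℝ≥0∞)) := tsum_congr fun l => by ring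
  refine ⟨T.toNNReal, fun c => ?_⟩
  have hT' : ((T.toNNReal : ℝ≥0) : ℝ≥0∞) = T := ENNReal.coe_toNNReal hT
  rcases eq_or_ne p ⊤ with hptop | hptop
  · subst hptop
    simp only [wnorm, if_pos rfl, ENNReal.coe_mul]
    refine iSup_le fun k => ?_
    calc ((‖(∑' l, a k l * c l)‖₊ : ℝ≥0) : ℝ≥0∞) * (‖m k‖₊ : ℝ≥0∞)
        ≤ ∑' l, B k l * ((‖c l‖₊ : ℝ≥0∞) * (‖m l‖₊ : ℝ≥0∞)) := hpoint c k
      _ ≤ ∑' l, B k l * (⨆ k', (‖c k'‖₊ : ℝ≥0∞) * (‖m k'‖₊ : ℝ≥0∞)) :=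
          ENNReal.tsum_le_tsum fun l => mul_le_mul_right
            (le_iSup (fun k' => (‖c k'‖₊ : ℝ≥0∞) * (‖m k'‖₊ : ℝ≥0∞)) l) _
      _ = T * ⨆ k', (‖c k'‖₊ : ℝ≥0∞) * (‖m k'‖₊ : ℝ≥0∞) := by
          rw [ENNReal.tsum_mul_right, hrow k]
      _ = T.toNNReal * ⨆ k', (‖c k'‖₊ : ℝ≥0∞) * (‖m k'‖₊ : ℝ≥0∞) := by rw [hT']
  · simp only [wnorm, if_neg hptop, ENNReal.coe_mul]
    set q : ℝ := p.toReal with hq_def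
    have hq1 : 1 ≤ q := by
      rw [hq_def, ← ENNReal.toReal_one]
      exact ENNReal.toReal_mono hptop hp
    have hq0 : (0:ℝ) < q := lt_of_lt_of_le one_pos hq1
    have hqne : q ≠ 0 := hq0.ne'
    set x : (Fin d → ℤ) → ℝ≥0∞ := fun l => (‖c l‖₊ : ℝ≥0∞) * (‖m l‖₊ : ℝ≥0∞) with hx_def
    set X : ℝ≥0∞ := ∑' l, x l ^ q with hX_def
    have key : (∑' k, (((‖(∑' l, a k l * c l)‖₊ : ℝ≥0) : ℝ≥0∞) * (‖m k‖₊ : ℝ≥0∞)) ^ q)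
        ≤ T ^ q * X := by
      calc (∑' k, (((‖(∑' l, a k l * c l)‖₊ : ℝ≥0) : ℝ≥0∞) * (‖m k‖₊ : ℝ≥0∞)) ^ q)
          ≤ ∑' k, (∑' l, B k l * x l) ^ q :=
            ENNReal.tsum_le_tsum fun k => ENNReal.rpow_le_rpow (hpoint c k) hq0.le
        _ ≤ ∑' k, T ^ (q - 1) * ∑' l, B k l * x l ^ q := by
            refine ENNReal.tsum_le_tsum fun k => ?_
            have h := holder_tsum_weight hq1 (B k) x
            rw [hrow k] at h
            have h2 := ENNReal.rpow_le_rpow h hq0.le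
            rw [ENNReal.mul_rpow_of_nonneg _ _ hq0.le, ← ENNReal.rpow_mul,
              ← ENNReal.rpow_mul] at h2
            have e1 : (1 - q⁻¹) * q = q - 1 := by field_simp
            have e2 : q⁻¹ * q = 1 := inv_mul_cancel₀ hqne
            rw [e1, e2, ENNReal.rpow_one] at h2
            exact h2
        _ = T ^ (q - 1) * ∑' (k) (l), B k l * x l ^ q := by rw [ENNReal.tsum_mul_left]
        _ = T ^ (q - 1) * ∑' (l) (k), B k l * x l ^ q := by rw [ENNReal.tsum_comm]
        _ = T ^ (q - 1) * (T * X) := by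
            have hl : ∀ l, (∑' k, B k l * x l ^ q) = T * x l ^ q := fun l => by
              rw [ENNReal.tsum_mul_right, hcol l]
            refine congrArg (fun z => T ^ (q - 1) * z) ?_
            rw [hX_def, ← ENNReal.tsum_mul_left]
            exact tsum_congr hl
        _ = T ^ q * X := by
            rw [← mul_assoc]
            congr 1
            have e : T ^ (q - 1) * T ^ (1:ℝ) = T ^ ((q - 1) + 1) :=
              (ENNReal.rpow_add_of_nonneg (q - 1) 1 (by linarith) zero_le_one).symm
            rw [ENNReal.rpow_one] at e
            rw [e]
            congr 1
            ring
    calc (∑' k, (((‖(∑' l, a k l * c l)‖₊ : ℝ≥0) : ℝ≥0∞) * (‖m k‖₊ : ℝ≥0∞)) ^ q) ^ (1/q)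
        ≤ (T ^ q * X) ^ (1/q) := ENNReal.rpow_le_rpow key (by positivity)
      _ = T * X ^ (1/q) := by
          rw [ENNReal.mul_rpow_of_nonneg _ _ (by positivity), ← ENNReal.rpow_mul,
            mul_one_div_cancel hqne, ENNReal.rpow_one]
      _ = T.toNNReal * X ^ (1/q) := by rw [hT']
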